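/- Let f : X → X be a pointwise periodic homeomorphism of a compact metric space and let A ∈ 2^X be an almost periodic point of 2^f. Then for every B in the closure (in the hyperspace 2^X) of the orbit {(2^f)^n(A) : n ∈ ℕ}, one has ⋃_{n∈ℕ} f^n(A) = ⋃_{n∈ℕ} f^n(B). -/
import Mathlib


open TopologicalSpace Metric Set Filter

/-- The induced map on the hyperspace of nonempty compact (= closed) subsets. -/
noncomputable def hyper {X : Type*} [MetricSpace X] (f : X ≃ₜ X) :
    NonemptyCompacts X → NonemptyCompacts X :=
  fun A => ⟨⟨f '' A, A.isCompact.image f.continuous⟩, A.nonempty.image f⟩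

/-- `x` is uniformly recurrent for `g`. -/
def IsUnifRec {α : Type*} [MetricSpace α] (g : α → α) (x : α) : Prop :=
  ∀ ε > (0:ℝ), ∃ N > 0, ∀ k : ℕ, dist (g^[k * N] x) x < ε

/-- `x` is recurrent for `g` (it belongs to its own ω-limit set). -/
def IsRec {α : Type*} [MetricSpace α] (g : α → α) (x : α) : Prop :=
  ∀ ε > (0:ℝ), ∀ m : ℕ, ∃ n ≥ m, 0 < n ∧ dist (g^[n] x) x < ε

/-- `x` is almost periodic for `g`. -/
def IsAP {α : Type*} [MetricSpace α] (g : α → α) (x : α) : Prop :=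
  ∀ ε > (0:ℝ), ∃ N : ℕ, ∀ n : ℕ, ∃ i < N, dist (g^[n + i] x) x < ε

/-- `(x, y)` is an asymptotic pair for `g`. -/
def Asymp {α : Type*} [MetricSpace α] (g : α → α) (x y : α) : Prop :=
  Filter.Tendsto (fun n => dist (g^[n] x) (g^[n] y)) Filter.atTop (nhds 0)

/-- `(x, y)` is a proximal pair for `g`. -/
def Proximal {α : Type*} [MetricSpace α] (g : α → α) (x y : α) : Prop :=
  ∀ ε > (0:ℝ), ∀ m : ℕ, ∃ n ≥ m, dist (g^[n] x) (g^[n] y) < ε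

/-- The ω-limit set of `x` under `g`. -/
def omegaSet {α : Type*} [MetricSpace α] (g : α → α) (x : α) : Set α :=
  {y | ∀ ε > (0:ℝ), ∀ m : ℕ, ∃ n ≥ m, dist (g^[n] x) y < ε}

/-- `M` is a minimal set of `g`. -/
def IsMinimalFor {α : Type*} [TopologicalSpace α] (g : α → α) (M : Set α) : Prop :=
  M.Nonempty ∧ IsClosed M ∧ Set.MapsTo g M M ∧
    ∀ M' ⊆ M, M'.Nonempty → IsClosed M' → Set.MapsTo g M' M' → M' = M

/-- `A` is internally chain transitive for `g`. -/
def ICT {α : Type*} [MetricSpace α] (g : α → α) (A : Set α) : Prop :=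
  ∀ a ∈ A, ∀ b ∈ A, ∀ ε > (0:ℝ), ∃ N : ℕ, 1 ≤ N ∧ ∃ c : ℕ → α,
    c 0 = a ∧ c N = b ∧ (∀ i ≤ N, c i ∈ A) ∧ ∀ i < N, dist (g (c i)) (c (i + 1)) < ε

set_option linter.unusedSectionVars false

section Aux
variable {X : Type*} [MetricSpace X] [CompactSpace X]

lemma hyper_iter_coe (f : X ≃ₜ X) (A : NonemptyCompacts X) (n : ℕ) :
    (((hyper f)^[n] A : Set X)) = (⇑f)^[n] '' A := by
  induction n with
  | zero => simp
  | succ n ih =>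
    have h2 : (⇑f)^[n+1] '' (A : Set X) = f '' ((⇑f)^[n] '' (A : Set X)) := by
      rw [Function.iterate_succ', Set.image_comp]
    rw [Function.iterate_succ_apply', h2, ← ih]; rfl

lemma NC_edist_ne_top (C D : NonemptyCompacts X) :
    EMetric.hausdorffEdist (C : Set X) (D : Set X) ≠ ⊤ :=
  Metric.hausdorffEdist_ne_top_of_nonempty_of_bounded C.nonempty D.nonempty
    C.isCompact.isBounded D.isCompact.isBounded

/-- pigeonhole over the finite orbit -/
lemma mem_orbit_of_infDist (g : X → X) (x : X) (p : ℕ) (hp : 0 < p) (hx : g^[p] x = x)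
    (D : NonemptyCompacts X)
    (h : ∀ ε > (0:ℝ), ∃ m : ℕ, infDist (g^[m] x) (D : Set X) < ε) :
    ∃ r < p, g^[r] x ∈ (D : Set X) := by
  have hper : Function.IsPeriodicPt g p x := hx
  obtain ⟨r₀, hr₀m, hmin⟩ := (Finset.range p).exists_min_image
    (fun r => infDist (g^[r] x) (D : Set X)) ⟨0, Finset.mem_range.2 hp⟩
  refine ⟨r₀, Finset.mem_range.1 hr₀m, ?_⟩
  rw [(D.isCompact.isClosed.mem_iff_infDist_zero D.nonempty)]
  refine le_antisymm ?_ infDist_nonneg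
  by_contra hpos
  push_neg at hpos
  obtain ⟨m, hm⟩ := h _ hpos
  rw [← hper.iterate_mod_apply m] at hm
  exact absurd (lt_of_le_of_lt (hmin _ (Finset.mem_range.2 (Nat.mod_lt _ hp))) hm) (lt_irrefl _)

/-- from infDist recurrence to membership in the union of images -/
lemma mem_iUnion_of_infDist (f : X ≃ₜ X) (hper : ∀ x : X, ∃ n > 0, (⇑f)^[n] x = x)
    (x : X) (D : NonemptyCompacts X)
    (h : ∀ ε > (0:ℝ), ∃ m : ℕ, infDist ((⇑f)^[m] x) (D : Set X) < ε) :
    x ∈ ⋃ n : ℕ, (⇑f)^[n] '' (D : Set X) := by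
  obtain ⟨p, hp, hxp⟩ := hper x
  obtain ⟨r, hr, hmem⟩ := mem_orbit_of_infDist (⇑f) x p hp hxp D h
  refine Set.mem_iUnion.2 ⟨p - r, ⟨(⇑f)^[r] x, hmem, ?_⟩⟩
  rw [← Function.iterate_add_apply, Nat.sub_add_cancel hr.le, hxp]

/-- quantitative uniform continuity of iterates of hyper f -/
lemma hyper_iter_unifCont (f : X ≃ₜ X) (i : ℕ) : UniformContinuous ((hyper f)^[i]) := by
  induction i with
  | zero => simpa using uniformContinuous_id
  | succ i ih =>
    rw [Function.iterate_succ']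
    refine UniformContinuous.comp ?_ ih
    -- hyper f is uniformly continuous
    rw [Metric.uniformContinuous_iff]
    intro ε hε
    have hfu : UniformContinuous (⇑f) := CompactSpace.uniformContinuous_of_continuous f.continuous
    obtain ⟨δ, hδ, hδ'⟩ := Metric.uniformContinuous_iff.1 hfu (ε/2) (by linarith)
    refine ⟨δ, hδ, fun {C D} hCD => ?_⟩
    rw [NonemptyCompacts.dist_eq] at hCD ⊢
    have key : ∀ (C D : NonemptyCompacts X), hausdorffDist (C : Set X) (D : Set X) < δ →
        ∀ y ∈ f '' (C : Set X), ∃ z ∈ f '' (D : Set X), dist y z ≤ ε/2 := by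
      intro C D hCD y hy
      obtain ⟨c, hc, rfl⟩ := hy
      obtain ⟨d, hd, hcd⟩ := exists_dist_lt_of_hausdorffDist_lt hc hCD (NC_edist_ne_top C D)
      exact ⟨f d, Set.mem_image_of_mem _ hd, (hδ' hcd).le⟩
    have : hausdorffDist ((hyper f C : Set X)) ((hyper f D : Set X)) ≤ ε/2 := by
      refine hausdorffDist_le_of_mem_dist (by linarith) (key C D hCD) ?_
      intro y hy
      obtain ⟨z, hz, h⟩ := key D C (by rwa [hausdorffDist_comm]) y hy
      exact ⟨z, hz, h⟩
    linarith

end Aux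

theorem stmt9 {X : Type*} [MetricSpace X] [CompactSpace X]
    (f : X ≃ₜ X) (hper : ∀ x : X, ∃ n > 0, (⇑f)^[n] x = x)
    (A : NonemptyCompacts X) (hAP : IsAP (hyper f) A)
    (B : NonemptyCompacts X)
    (hB : B ∈ closure (Set.range fun n : ℕ => (hyper f)^[n] A)) :
    (⋃ n : ℕ, (⇑f)^[n] '' (A : Set X)) = ⋃ n : ℕ, (⇑f)^[n] '' (B : Set X) := by
  set H := hyper f with hH
  -- closeness of orbit of A to B
  have horbit : ∀ ε > (0:ℝ), ∃ n : ℕ, dist (H^[n] A) B < ε := by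
    intro ε hε
    obtain ⟨b, ⟨n, rfl⟩, hdb⟩ := Metric.mem_closure_iff.1 hB ε hε
    exact ⟨n, by rwa [dist_comm] at hdb⟩
  -- return: orbit of B comes close to A
  have hreturn : ∀ ε > (0:ℝ), ∃ i : ℕ, dist (H^[i] B) A < ε := by
    intro ε hε
    obtain ⟨N, hN⟩ := hAP (ε/2) (half_pos hε)
    have hN1 : 0 < N := by
      obtain ⟨i, hi, -⟩ := hN 0; omega
    have key : ∀ i : ℕ, ∃ δ > (0:ℝ), ∀ C D : NonemptyCompacts X,
        dist C D < δ → dist (H^[i] C) (H^[i] D) < ε/2 := by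
      intro i
      obtain ⟨δ, hδ, hδ'⟩ := Metric.uniformContinuous_iff.1 (hyper_iter_unifCont f i)
        (ε/2) (half_pos hε)
      exact ⟨δ, hδ, fun C D h => hδ' h⟩
    choose δ hδpos hδ using key
    obtain ⟨i₀, hi₀m, hi₀min⟩ := (Finset.range N).exists_min_image δ ⟨0, Finset.mem_range.2 hN1⟩
    obtain ⟨n, hn⟩ := horbit (δ i₀) (hδpos i₀)
    obtain ⟨i, hiN, hi⟩ := hN n
    refine ⟨i, ?_⟩
    have h1 : dist (H^[i] B) (H^[i] (H^[n] A)) < ε/2 := by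
      refine hδ i B (H^[n] A) ?_
      calc dist B (H^[n] A) = dist (H^[n] A) B := dist_comm _ _
        _ < δ i₀ := hn
        _ ≤ δ i := hi₀min i (Finset.mem_range.2 hiN)
    have h2 : H^[i] (H^[n] A) = H^[n+i] A := by
      rw [← Function.iterate_add_apply, add_comm]
    calc dist (H^[i] B) A ≤ dist (H^[i] B) (H^[i] (H^[n] A)) + dist (H^[i] (H^[n] A)) A :=
          dist_triangle _ _ _
      _ < ε/2 + ε/2 := by rw [h2] at h1 ⊢; exact add_lt_add h1 hi
      _ = ε := add_halves ε
  -- Step 1: every point of A lies in the union of iterates of B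
  have stepA : ∀ x ∈ (A : Set X), x ∈ ⋃ n : ℕ, (⇑f)^[n] '' (B : Set X) := by
    intro x hx
    refine mem_iUnion_of_infDist f hper x B ?_
    intro ε hε
    obtain ⟨n, hn⟩ := horbit ε hε
    refine ⟨n, ?_⟩
    rw [NonemptyCompacts.dist_eq] at hn
    have hxm : (⇑f)^[n] x ∈ ((H^[n] A : Set X)) := by
      rw [hH, hyper_iter_coe]; exact Set.mem_image_of_mem _ hx
    exact lt_of_le_of_lt (infDist_le_hausdorffDist_of_mem hxm (NC_edist_ne_top _ _)) hn
  -- Step 2: every point of B lies in the union of iterates of A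
  have stepB : ∀ b ∈ (B : Set X), b ∈ ⋃ n : ℕ, (⇑f)^[n] '' (A : Set X) := by
    intro b hb
    refine mem_iUnion_of_infDist f hper b A ?_
    intro ε hε
    obtain ⟨i, hi⟩ := hreturn ε hε
    refine ⟨i, ?_⟩
    rw [NonemptyCompacts.dist_eq] at hi
    have hbm : (⇑f)^[i] b ∈ ((H^[i] B : Set X)) := by
      rw [hH, hyper_iter_coe]; exact Set.mem_image_of_mem _ hb
    exact lt_of_le_of_lt (infDist_le_hausdorffDist_of_mem hbm (NC_edist_ne_top _ _)) hi
  -- conclude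
  apply Set.Subset.antisymm
  · refine Set.iUnion_subset fun n => ?_
    rintro y ⟨x, hx, rfl⟩
    obtain ⟨m, b, hb, hbx⟩ := Set.mem_iUnion.1 (stepA x hx)
    exact Set.mem_iUnion.2 ⟨n + m, b, hb, by rw [Function.iterate_add_apply, hbx]⟩
  · refine Set.iUnion_subset fun n => ?_
    rintro y ⟨b, hb, rfl⟩
    obtain ⟨m, a, ha, hab⟩ := Set.mem_iUnion.1 (stepB b hb)
    exact Set.mem_iUnion.2 ⟨n + m, a, ha, by rw [Function.iterate_add_apply, hab]⟩
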